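/- For any recursive projective linearisation Π (with associated anti-projective linearisation Π̄ defined by the same permutation ρ but using anti-subtrees), Π̄(S) = Π(overline(S)) for every simple dependency tree S. The proof is by induction on the depth of S. -/
import Mathlib


def rev {ζ σ : Type*} (S : List ζ → Option σ) : List ζ → Option σ :=
  fun x => S x.reverse

/-- For a recursive projective linearisation `L` and the associated recursive
anti-projective linearisation `La` (same permutation `ρ`, anti-subtrees instead
of subtrees), one has `La S = L (overline S)` for every simple dependency tree
`S` (a partial map with finite domain). -/
theorem antiproj_eq_proj_rev {σ : Type*} {m : ℕ} (ρ : Equiv.Perm (Fin (m + 1)))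
    (L La : (List (Fin m) → Option σ) → List σ)
    -- `L` is the recursive projective linearisation given by `ρ`
    (hL0 : L (fun _ => none) = [])
    (hL : ∀ S : List (Fin m) → Option σ, {x | (S x).isSome}.Finite →
      L S = (List.ofFn (fun j : Fin (m + 1) =>
        Fin.cases (motive := fun _ => List σ) ((S []).toList)
          (fun i : Fin m => L (fun x => S (i :: x))) (ρ j))).flatten)
    -- `La` is the recursive anti-projective linearisation given by `ρ`
    (hLa0 : La (fun _ => none) = [])
    (hLa : ∀ S : List (Fin m) → Option σ, {x | (S x).isSome}.Finite →
      La S = (List.ofFn (fun j : Fin (m + 1) =>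
        Fin.cases (motive := fun _ => List σ) ((S []).toList)
          (fun i : Fin m => La (fun x => S (x ++ [i]))) (ρ j))).flatten) :
    ∀ S : List (Fin m) → Option σ, {x | (S x).isSome}.Finite →
      La S = L (rev S) := by
  -- strong induction on a bound on lengths of elements in the support
  have key : ∀ N : ℕ, ∀ S : List (Fin m) → Option σ, {x | (S x).isSome}.Finite →
      (∀ x, (S x).isSome → x.length < N) → La S = L (rev S) := by
    intro N
    induction N with
    | zero =>
      intro S hS hb
      have hS0 : S = fun _ => none := by
        funext x
        by_contra h
        have : (S x).isSome := Option.ne_none_iff_isSome.mp h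
        exact Nat.not_lt_zero _ (hb x this)
      subst hS0
      exact hLa0.trans hL0.symm
    | succ N ih =>
      intro S hS hb
      have hrevS : {x | ((rev S) x).isSome}.Finite := by
        have : {x | ((rev S) x).isSome} ⊆ List.reverse '' {x | (S x).isSome} := by
          intro x hx
          exact ⟨x.reverse, hx, List.reverse_reverse x⟩
        exact (hS.image _).subset this
      rw [hLa S hS, hL (rev S) hrevS]
      refine congrArg List.flatten (congrArg List.ofFn (funext fun j => ?_))
      cases hρ : ρ j using Fin.cases with
      | zero => rfl
      | succ i =>
        simp only [Fin.cases_succ]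
        have hchild : (fun x => (rev S) (i :: x)) = rev (fun x => S (x ++ [i])) := by
          funext x
          simp [rev]
        rw [hchild]
        apply ih
        · have : {x | (S (x ++ [i])).isSome} ⊆
              (fun x : List (Fin m) => x ++ [i]) ⁻¹' {x | (S x).isSome} := fun x hx => hx
          exact Set.Finite.preimage (Function.Injective.injOn
            (fun a b h => by simpa using h)) (hS.subset (fun x hx => hx)) |>.subset this
        · intro x hx
          have := hb (x ++ [i]) hx
          simpa using Nat.lt_of_succ_lt_succ (by simpa using this)
  intro S hS
  classical
  set N := hS.toFinset.sup (fun x => x.length) + 1 with hN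
  apply key N S hS
  intro x hx
  have : x ∈ hS.toFinset := hS.mem_toFinset.mpr hx
  exact Nat.lt_succ_of_le (Finset.le_sup (f := fun x : List (Fin m) => x.length) this)
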